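/- Let N be an n-bit Fibonacci NLFSR with f_{n−1} = x_0 ⊕ g, let P be the set of supports of the monomials of the ANF of g (so every S ∈ P satisfies S ⊆ {1,…,n−1}), and assume some S ∈ P has |S| ≥ 2. Set τ = max{ max(S) − min(S) : S ∈ P, |S| ≥ 2 }. Let Ñ be the n-bit NLFSR with feedback functions f̃_i = x_{(i+1) mod n} ⊕ g̃_i, where g̃_i is the XOR of the monomials p_{S − min(S)} over all S ∈ P with min(S) ≤ n−1−τ and n−1−min(S) = i, together with, when i = τ, the monomials p_{S−(n−1−τ)} over all S ∈ P with min(S) > n−1−τ (and g̃_i = 0 when no such monomial exists). Then Ñ is uniform and Ñ is equivalent to N. -/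

import Mathlib

/-- The state-update map of an NLFSR given by feedback functions `F`. -/
def nlfsrStep (n : ℕ) (F : Fin n → (Fin n → Bool) → Bool) (s : Fin n → Bool) : Fin n → Bool :=
  fun i => F i s

/-- The state of the NLFSR at time `t`, starting from initial state `s0`. -/
def stateAt (n : ℕ) (F : Fin n → (Fin n → Bool) → Bool) (s0 : Fin n → Bool) (t : ℕ) :
    Fin n → Bool :=
  (nlfsrStep n F)^[t] s0

/-- The index `(i+1) mod n`. -/
def succIdx {n : ℕ} (i : Fin n) : Fin n :=
  ⟨((i : ℕ) + 1) % n, Nat.mod_lt _ i.pos⟩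

/-- Two NLFSRs are equivalent if there are initial states (possibly different for each)
from which they generate the same output sequences (the output is bit 0). -/
def EquivalentN (n : ℕ) (F F' : Fin n → (Fin n → Bool) → Bool) : Prop :=
  ∃ s0 s0' : Fin n → Bool, ∀ (t : ℕ) (z : Fin n), (z : ℕ) = 0 →
    stateAt n F s0 t z = stateAt n F' s0' t z

/-- The dependence set of a Boolean function of `n` variables. -/
def depF (n : ℕ) (f : (Fin n → Bool) → Bool) : Finset (Fin n) :=
  Finset.univ.filter
    (fun i => ∃ s : Fin n → Bool, f (Function.update s i false) ≠ f (Function.update s i true))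

/-- The (unique) function `g_i` with `f_i = x_{i+1} ⊕ g_i`. -/
def gfun (n : ℕ) (F : Fin n → (Fin n → Bool) → Bool) (i : Fin n) : (Fin n → Bool) → Bool :=
  fun s => xor (F i s) (s (succIdx i))

/-- All feedback functions are singular: `f_i = x_{(i+1) mod n} ⊕ g_i` with
`(i+1) mod n ∉ dep(g_i)`. -/
def SingularAll (n : ℕ) (F : Fin n → (Fin n → Bool) → Bool) : Prop :=
  ∀ i : Fin n, succIdx i ∉ depF n (gfun n F i)

/-- The terminal bit: the largest index `i ∈ {0,…,n−1}` such that `f_j = x_{j+1}`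
for all `j < i`. -/
noncomputable def terminalBit (n : ℕ) (F : Fin n → (Fin n → Bool) → Bool) : ℕ :=
  sSup {i : ℕ | i < n ∧ ∀ j : Fin n, (j : ℕ) < i → ∀ s, F j s = s (succIdx j)}

/-- A uniform NLFSR: all feedback functions are singular and, for every bit `i`
above the terminal bit `τ`, every index in `dep(g_i)` is at most `τ`. -/
def UniformN (n : ℕ) (F : Fin n → (Fin n → Bool) → Bool) : Prop :=
  SingularAll n F ∧
    ∀ i : Fin n, terminalBit n F < (i : ℕ) →
      ∀ k ∈ depF n (gfun n F i), (k : ℕ) ≤ terminalBit n F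

/-- The monomial `p_S(x) = ∧_{i ∈ S} x_i`. -/
def monomial (n : ℕ) (S : Finset (Fin n)) : (Fin n → Bool) → Bool :=
  fun s => decide (∀ i ∈ S, s i = true)

/-- The ANF coefficient of `f` at the monomial with support `S`
(Möbius inversion over `GF(2)`). -/
def anfCoeff (n : ℕ) (f : (Fin n → Bool) → Bool) (S : Finset (Fin n)) : Bool :=
  decide (Odd (S.powerset.filter (fun T => f (fun i => decide (i ∈ T)) = true)).card)

/-- `S − k = {(i − k) mod n : i ∈ S}`. -/
def shiftSet {n : ℕ} (S : Finset (Fin n)) (k : ℕ) : Finset (Fin n) :=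
  S.image (fun i : Fin n => (⟨((i : ℕ) + (n - k % n)) % n, Nat.mod_lt _ i.pos⟩ : Fin n))

/-- The smallest index of a variable in `S`. -/
noncomputable def minIdx {n : ℕ} (S : Finset (Fin n)) : ℕ :=
  sInf {m : ℕ | ∃ i ∈ S, (i : ℕ) = m}

/-- The largest index of a variable in `S`. -/
noncomputable def maxIdx {n : ℕ} (S : Finset (Fin n)) : ℕ :=
  sSup {m : ℕ | ∃ i ∈ S, (i : ℕ) = m}

/-- Shifting the monomial `p_S` from `g_a` to `g_b`: it replaces `g_a` by `g_a ⊕ p_S`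
and `g_b` by `g_b ⊕ p_{S−(a−b)}`, leaving all other feedback functions unchanged. -/
def shiftNLFSR {n : ℕ} (F : Fin n → (Fin n → Bool) → Bool) (a b : Fin n)
    (S : Finset (Fin n)) : Fin n → (Fin n → Bool) → Bool :=
  fun i s =>
    if i = a then xor (F i s) (monomial n S s)
    else if i = b then xor (F i s) (monomial n (shiftSet S ((a : ℕ) - (b : ℕ))) s)
    else F i s

/-- A Fibonacci NLFSR: `f_i = x_{i+1}` for `0 ≤ i < n−1`, and `f_{n−1} = x_0 ⊕ g_{n−1}`
is singular with `0 ∉ dep(g_{n−1})`. -/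
def FibonacciP (n : ℕ) (F : Fin n → (Fin n → Bool) → Bool) : Prop :=
  (∀ i : Fin n, (i : ℕ) < n - 1 → ∀ s, F i s = s (succIdx i)) ∧
  (∀ i : Fin n, (i : ℕ) = n - 1 → succIdx i ∉ depF n (gfun n F i))

/-- A finite directed graph: a finite vertex set together with a finite edge set. -/
structure DiGraph (V : Type) [DecidableEq V] where
  verts : Finset V
  edges : Finset (V × V)

/-- One substitution step `sub(v_i, v_j)`: if `v_i` has exactly one incoming edge,
coming from `v_j ≠ v_i`, remove `v_i` and, for each outgoing edge `(v_i, v_k)`,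
add the edge `(v_j, v_k)`. -/
def SubStep {V : Type} [DecidableEq V] (G G' : DiGraph V) : Prop :=
  ∃ i j : V, i ∈ G.verts ∧ j ∈ G.verts ∧ i ≠ j ∧
    G.edges.filter (fun e => e.2 = i) = {(j, i)} ∧
    G' = ⟨G.verts.erase i,
      (G.edges.filter (fun e => e.1 ≠ i ∧ e.2 ≠ i)) ∪
        ((G.edges.filter (fun e => e.1 = i)).image (fun e => (j, e.2)))⟩

/-- A graph is reducible to the single vertex `v` if some finite sequence of
substitutions transforms it into a one-vertex graph on `v`. -/
def ReducibleTo {V : Type} [DecidableEq V] (G : DiGraph V) (v : V) : Prop :=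
  ∃ G' : DiGraph V, Relation.ReflTransGen SubStep G G' ∧ G'.verts = {v}

/-- The feedback graph of an NLFSR: there is an edge from `v_i` to `v_j`
iff `i ∈ dep(f_j)`. -/
def feedbackGraph (n : ℕ) (F : Fin n → (Fin n → Bool) → Bool) : DiGraph (Fin n) :=
  ⟨Finset.univ, Finset.univ.filter (fun e : Fin n × Fin n => e.1 ∈ depF n (F e.2))⟩

/-- XOR of the Booleans `f x` over `x ∈ A`. -/
def xorSum {α : Type*} (A : Finset α) (f : α → Bool) : Bool :=
  decide (Odd (A.filter (fun x => f x = true)).card)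

/-- The feedback functions `g̃_i` of the fully shifted Galois NLFSR obtained from a
Fibonacci NLFSR whose feedback monomial supports are `P`, with terminal bit `τ`. -/
noncomputable def galoisG (n : ℕ) (P : Finset (Finset (Fin n))) (τ : ℕ) :
    Fin n → (Fin n → Bool) → Bool :=
  fun i s =>
    xor
      (xorSum (P.filter (fun S => minIdx S ≤ n - 1 - τ ∧ n - 1 - minIdx S = (i : ℕ)))
        (fun S => monomial n (shiftSet S (minIdx S)) s))
      (if (i : ℕ) = τ then
        xorSum (P.filter (fun S => n - 1 - τ < minIdx S))
          (fun S => monomial n (shiftSet S (n - 1 - τ)) s)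
      else false)
section Helpers

open Finset

/-- Bool to ZMod 2. -/
def bv (b : Bool) : ZMod 2 := if b then 1 else 0

lemma bv_inj {a b : Bool} (h : bv a = bv b) : a = b := by
  cases a <;> cases b <;> revert h <;> simp [bv] <;> decide

lemma bv_xor (a b : Bool) : bv (xor a b) = bv a + bv b := by
  cases a <;> cases b <;> simp [bv] <;> decide

lemma bv_odd (m : ℕ) : bv (decide (Odd m)) = (m : ZMod 2) := by
  have hmod : (m : ZMod 2) = ((m % 2 : ℕ) : ZMod 2) := by
    conv_lhs => rw [← Nat.div_add_mod m 2]
    push_cast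
    have h2 : ((2:ℕ) : ZMod 2) = 0 := rfl
    push_cast at h2
    rw [h2]
    ring
  rcases Nat.even_or_odd m with h | h
  · rw [Nat.even_iff] at h
    simp [bv, hmod, h, Nat.odd_iff]
  · rw [Nat.odd_iff] at h
    simp [bv, hmod, h, Nat.odd_iff]

lemma bv_xorSum {α : Type*} (A : Finset α) (f : α → Bool) :
    bv (xorSum A f) = ∑ x ∈ A, bv (f x) := by
  rw [xorSum, bv_odd]
  rw [Finset.card_filter]
  push_cast
  rw [Finset.sum_congr rfl]
  intro x _
  cases h : f x <;> simp [bv, h]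

lemma notMem_depF {n : ℕ} {f : (Fin n → Bool) → Bool} {k : Fin n}
    (h : ∀ (s : Fin n → Bool) (b : Bool), f (Function.update s k b) = f s) :
    k ∉ depF n f := by
  simp only [depF, Finset.mem_filter, Finset.mem_univ, true_and, not_exists]
  intro s
  simp [h s false, h s true]

lemma minIdx_le {n : ℕ} {S : Finset (Fin n)} {i : Fin n} (hi : i ∈ S) :
    minIdx S ≤ (i : ℕ) :=
  Nat.sInf_le ⟨i, hi, rfl⟩

lemma minIdx_mem {n : ℕ} {S : Finset (Fin n)} (h : S.Nonempty) :
    ∃ i ∈ S, (i : ℕ) = minIdx S := by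
  have : minIdx S ∈ {m : ℕ | ∃ i ∈ S, (i : ℕ) = m} :=
    Nat.sInf_mem ⟨(h.choose : ℕ), h.choose, h.choose_spec, rfl⟩
  exact this

lemma bddAbove_idx {n : ℕ} (S : Finset (Fin n)) :
    BddAbove {m : ℕ | ∃ i ∈ S, (i : ℕ) = m} := by
  refine ⟨n, fun m hm => ?_⟩
  obtain ⟨i, _, rfl⟩ := hm
  exact le_of_lt i.isLt

lemma le_maxIdx {n : ℕ} {S : Finset (Fin n)} {i : Fin n} (hi : i ∈ S) :
    (i : ℕ) ≤ maxIdx S :=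
  le_csSup (bddAbove_idx S) ⟨i, hi, rfl⟩

lemma maxIdx_mem {n : ℕ} {S : Finset (Fin n)} (h : S.Nonempty) :
    ∃ i ∈ S, (i : ℕ) = maxIdx S := by
  have : maxIdx S ∈ {m : ℕ | ∃ i ∈ S, (i : ℕ) = m} :=
    Nat.sSup_mem ⟨(h.choose : ℕ), h.choose, h.choose_spec, rfl⟩ (bddAbove_idx S)
  exact this

lemma shift_val {n k i : ℕ} (hkn : k < n) (hki : k ≤ i) (hin : i < n) :
    (i + (n - k % n)) % n = i - k := by
  rw [Nat.mod_eq_of_lt hkn, Nat.mod_eq_sub_mod (by omega), Nat.mod_eq_of_lt (by omega)]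
  omega

lemma mem_shiftSet {n : ℕ} {S : Finset (Fin n)} {k : ℕ} (hkn : k < n)
    (hk : ∀ i ∈ S, k ≤ (i : ℕ)) {j : Fin n} :
    j ∈ shiftSet S k ↔ ∃ i ∈ S, (j : ℕ) = (i : ℕ) - k := by
  simp only [shiftSet, Finset.mem_image]
  constructor
  · rintro ⟨i, hi, rfl⟩
    exact ⟨i, hi, shift_val hkn (hk i hi) i.isLt⟩
  · rintro ⟨i, hi, hj⟩
    refine ⟨i, hi, ?_⟩
    apply Fin.ext
    show (((i:ℕ) + (n - k % n)) % n) = (j : ℕ)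
    rw [shift_val hkn (hk i hi) i.isLt, hj]

lemma monomial_shiftSet {n : ℕ} {S : Finset (Fin n)} {k : ℕ} (hkn : k < n)
    (hk : ∀ i ∈ S, k ≤ (i : ℕ)) (s : Fin n → Bool) :
    monomial n (shiftSet S k) s =
      decide (∀ i ∈ S, s ⟨(i : ℕ) - k, by omega⟩ = true) := by
  have key : ∀ i (hi : i ∈ S),
      (⟨((i:ℕ) + (n - k % n)) % n, Nat.mod_lt _ i.pos⟩ : Fin n)
        = ⟨(i : ℕ) - k, by omega⟩ := by
    intro i hi
    apply Fin.ext
    exact shift_val hkn (hk i hi) i.isLt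
  simp only [monomial, shiftSet, decide_eq_decide]
  refine decide_eq_decide.mpr ?_
  rw [Finset.forall_mem_image]
  constructor
  · intro h i hi
    rw [← key i hi]; exact h hi
  · intro h i hi
    rw [key i hi]; exact h i hi

end Helpers
section ANF

open Finset

lemma zmod2_pow_card {k : ℕ} (hk : 1 ≤ k) : ((2 ^ k : ℕ) : ZMod 2) = 0 := by
  push_cast
  rw [show ((2:ZMod 2)) = 0 by decide]
  exact zero_pow (by omega)

lemma card_between {α : Type*} [DecidableEq α] (T X : Finset α) (hTX : T ⊆ X) :
    (X.powerset.filter (fun S => T ⊆ S)).card = 2 ^ (X \ T).card := by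
  have hset : X.powerset.filter (fun S => T ⊆ S)
      = (X \ T).powerset.image (fun R => T ∪ R) := by
    ext S
    simp only [Finset.mem_filter, Finset.mem_powerset, Finset.mem_image]
    constructor
    · rintro ⟨hSX, hTS⟩
      exact ⟨S \ T, Finset.sdiff_subset_sdiff hSX (le_refl T),
        Finset.union_sdiff_of_subset hTS⟩
    · rintro ⟨R, hR, rfl⟩
      exact ⟨Finset.union_subset hTX (hR.trans Finset.sdiff_subset),
        Finset.subset_union_left⟩
  rw [hset, Finset.card_image_of_injOn, Finset.card_powerset]
  intro R1 hR1 R2 hR2 h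
  rw [Finset.mem_coe, Finset.mem_powerset] at hR1 hR2
  have d1 : Disjoint T R1 := Finset.disjoint_of_subset_right hR1 Finset.disjoint_sdiff
  have d2 : Disjoint T R2 := Finset.disjoint_of_subset_right hR2 Finset.disjoint_sdiff
  have := congrArg (fun W => W \ T) h
  simpa [Finset.union_sdiff_cancel_left d1, Finset.union_sdiff_cancel_left d2] using this

lemma anf_expand (n : ℕ) (f : (Fin n → Bool) → Bool) (s : Fin n → Bool) :
    bv (f s) = ∑ S ∈ Finset.univ.filter (fun S => anfCoeff n f S = true),
      bv (monomial n S s) := by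
  classical
  set X : Finset (Fin n) := Finset.univ.filter (fun i => s i = true) with hX
  have hs : s = fun i => decide (i ∈ X) := by
    funext i; cases h : s i <;> simp [hX, h]
  set h : Finset (Fin n) → ZMod 2 := fun T => bv (f (fun i => decide (i ∈ T))) with hh
  have hmono : ∀ S : Finset (Fin n), bv (monomial n S s) = if S ⊆ X then 1 else 0 := by
    intro S
    by_cases hSX : S ⊆ X
    · have : monomial n S s = true := by
        rw [monomial, decide_eq_true_eq]
        intro i hi
        have := hSX hi
        rw [hX, Finset.mem_filter] at this
        exact this.2
      rw [this, if_pos hSX]; rfl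
    · have : monomial n S s = false := by
        rw [monomial, decide_eq_false_iff_not]
        intro hcon
        exact hSX (fun i hi => by
          rw [hX, Finset.mem_filter]
          exact ⟨Finset.mem_univ i, hcon i hi⟩)
      rw [this, if_neg hSX]; rfl
  have hbvC : ∀ S : Finset (Fin n), bv (anfCoeff n f S) = ∑ T ∈ S.powerset, h T := by
    intro S
    have : anfCoeff n f S = xorSum S.powerset (fun T => f (fun i => decide (i ∈ T))) := rfl
    rw [this, bv_xorSum]
  -- RHS = sum over powerset of coefficients
  have step1 : ∑ S ∈ Finset.univ.filter (fun S => anfCoeff n f S = true),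
      bv (monomial n S s) = ∑ S ∈ X.powerset, bv (anfCoeff n f S) := by
    rw [Finset.sum_filter]
    have e1 : ∀ S : Finset (Fin n),
        (if anfCoeff n f S = true then bv (monomial n S s) else 0)
          = bv (anfCoeff n f S) * bv (monomial n S s) := by
      intro S
      cases hc : anfCoeff n f S <;> simp [bv]
    rw [Finset.sum_congr rfl (fun S _ => e1 S)]
    have e2 : ∀ S : Finset (Fin n),
        bv (anfCoeff n f S) * bv (monomial n S s)
          = if S ⊆ X then bv (anfCoeff n f S) else 0 := by
      intro S
      rw [hmono S]
      by_cases hSX : S ⊆ X <;> simp [hSX]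
    rw [Finset.sum_congr rfl (fun S _ => e2 S), ← Finset.sum_filter]
    congr 1
    ext S
    simp [Finset.mem_powerset]
  rw [step1, Finset.sum_congr rfl (fun S _ => hbvC S)]
  -- swap and count
  have h1 : ∀ S ∈ X.powerset, ∑ T ∈ S.powerset, h T
      = ∑ T ∈ X.powerset, if T ⊆ S then h T else 0 := by
    intro S hS
    rw [Finset.mem_powerset] at hS
    rw [← Finset.sum_filter]
    apply Finset.sum_congr _ (fun T _ => rfl)
    ext T
    simp only [Finset.mem_powerset, Finset.mem_filter]
    exact ⟨fun hTS => ⟨hTS.trans hS, hTS⟩, fun hT => hT.2⟩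
  rw [Finset.sum_congr rfl h1, Finset.sum_comm]
  have h2 : ∀ T ∈ X.powerset, ∑ S ∈ X.powerset, (if T ⊆ S then h T else 0)
      = if T = X then h T else 0 := by
    intro T hT
    rw [Finset.mem_powerset] at hT
    rw [← Finset.sum_filter, Finset.sum_const, nsmul_eq_mul, card_between T X hT]
    by_cases hTX : T = X
    · subst hTX
      simp [Finset.sdiff_self]
    · have hc : 1 ≤ (X \ T).card := by
        have := Finset.card_lt_card (Finset.ssubset_iff_subset_ne.mpr ⟨hT, hTX⟩)
        rw [Finset.card_sdiff_of_subset hT]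
        omega
      rw [zmod2_pow_card hc, zero_mul, if_neg hTX]
  rw [Finset.sum_congr rfl h2, Finset.sum_ite_eq' X.powerset X h,
    if_pos (Finset.mem_powerset.mpr (le_refl X))]
  rw [hh]
  conv_lhs => rw [hs]

end ANF
section PartA

lemma xorSum_congr {α : Type*} {A : Finset α} {f g : α → Bool}
    (h : ∀ x ∈ A, f x = g x) : xorSum A f = xorSum A g := by
  unfold xorSum
  congr 2
  apply congrArg
  apply Finset.filter_congr
  intro x hx
  rw [h x hx]

lemma xorSum_empty {α : Type*} (f : α → Bool) : xorSum (∅ : Finset α) f = false := by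
  simp [xorSum, Nat.odd_iff]

lemma monomial_update_eq {n : ℕ} {T : Finset (Fin n)} {k : Fin n} (hk : k ∉ T)
    (s : Fin n → Bool) (b : Bool) :
    monomial n T (Function.update s k b) = monomial n T s := by
  unfold monomial
  rw [decide_eq_decide]
  apply forall_congr'
  intro i
  apply imp_congr_right
  intro hi
  rw [Function.update_of_ne (fun h : i = k => hk (h ▸ hi))]

variable {n : ℕ} {P : Finset (Finset (Fin n))} {τ : ℕ}

lemma galoisG_eq_false (hmin1 : ∀ S ∈ P, 1 ≤ minIdx S) (hτn : τ ≤ n - 2) (hn2 : 2 ≤ n)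
    {i : Fin n} (hi : (i : ℕ) < τ ∨ (i : ℕ) = n - 1) (s : Fin n → Bool) :
    galoisG n P τ i s = false := by
  have h1 : P.filter (fun S => minIdx S ≤ n - 1 - τ ∧ n - 1 - minIdx S = (i : ℕ)) = ∅ := by
    rw [Finset.filter_eq_empty_iff]
    rintro S hS ⟨hle, heq⟩
    have := hmin1 S hS
    omega
  have h2 : ¬((i : ℕ) = τ) := by omega
  rw [galoisG]
  simp only [h1, if_neg h2, xorSum_empty, Bool.xor_false]

lemma galoisG_update (hPne : ∀ S ∈ P, S.Nonempty) (hmin1 : ∀ S ∈ P, 1 ≤ minIdx S)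
    (hτle : ∀ S ∈ P, maxIdx S - minIdx S ≤ τ) (hτn : τ ≤ n - 2) (hn2 : 2 ≤ n)
    {k : Fin n} (hk : τ < (k : ℕ)) (i : Fin n) (s : Fin n → Bool) (b : Bool) :
    galoisG n P τ i (Function.update s k b) = galoisG n P τ i s := by
  rw [galoisG, galoisG]
  congr 1
  · apply xorSum_congr
    intro S hS
    rw [Finset.mem_filter] at hS
    apply monomial_update_eq
    intro hmem
    have hminlt : minIdx S < n := by
      obtain ⟨i', hi', he⟩ := minIdx_mem (hPne S hS.1)
      have := i'.isLt
      omega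
    rw [mem_shiftSet hminlt (fun j hj => minIdx_le hj)] at hmem
    obtain ⟨i', hi', he⟩ := hmem
    have h1 := le_maxIdx hi'
    have h2 := hτle S hS.1
    omega
  · by_cases hc : (i : ℕ) = τ
    · rw [if_pos hc, if_pos hc]
      apply xorSum_congr
      intro S hS
      rw [Finset.mem_filter] at hS
      apply monomial_update_eq
      intro hmem
      have hlt : n - 1 - τ < n := by omega
      rw [mem_shiftSet hlt (fun j hj => le_of_lt (lt_of_lt_of_le hS.2 (minIdx_le hj)))]
        at hmem
      obtain ⟨i', hi', he⟩ := hmem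
      have := i'.isLt
      omega
    · rw [if_neg hc, if_neg hc]

lemma depF_galoisG (hPne : ∀ S ∈ P, S.Nonempty) (hmin1 : ∀ S ∈ P, 1 ≤ minIdx S)
    (hτle : ∀ S ∈ P, maxIdx S - minIdx S ≤ τ) (hτn : τ ≤ n - 2) (hn2 : 2 ≤ n)
    {i k : Fin n} (hk : k ∈ depF n (galoisG n P τ i)) :
    (k : ℕ) ≤ τ ∧ τ ≤ (i : ℕ) ∧ (i : ℕ) ≤ n - 2 := by
  refine ⟨?_, ?_⟩
  · by_contra h
    push_neg at h
    exact absurd hk (notMem_depF (galoisG_update hPne hmin1 hτle hτn hn2 h i))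
  · by_contra h
    have hi : (i : ℕ) < τ ∨ (i : ℕ) = n - 1 := by
      have := i.isLt
      omega
    have hconst : ∀ s, galoisG n P τ i s = false :=
      galoisG_eq_false hmin1 hτn hn2 hi
    refine absurd hk (notMem_depF ?_)
    intro s b
    rw [hconst, hconst]

end PartA
section PartB

lemma stateAt_succ (n : ℕ) (F : Fin n → (Fin n → Bool) → Bool) (s0 : Fin n → Bool) (t : ℕ) :
    stateAt n F s0 (t + 1) = nlfsrStep n F (stateAt n F s0 t) := by
  unfold stateAt
  rw [Function.iterate_succ_apply']

variable {n : ℕ} {P : Finset (Finset (Fin n))} {τ : ℕ}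
  {Ft : Fin n → (Fin n → Bool) → Bool} {s0 : Fin n → Bool}

lemma galois_shift_aux (hmin1 : ∀ S ∈ P, 1 ≤ minIdx S) (hτn : τ ≤ n - 2) (hn2 : 2 ≤ n)
    (hFt : ∀ i s, Ft i s = xor (s (succIdx i)) (galoisG n P τ i s)) :
    ∀ (m : ℕ) (_ : m ≤ τ) (t : ℕ),
      stateAt n Ft s0 t ⟨m, by omega⟩ = stateAt n Ft s0 (t + m) ⟨0, by omega⟩ := by
  intro m
  induction m with
  | zero => intro _ t; rfl
  | succ m ih =>
    intro hm t
    have h1 : stateAt n Ft s0 (t + 1) ⟨m, by omega⟩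
        = stateAt n Ft s0 t ⟨m + 1, by omega⟩ := by
      rw [stateAt_succ]
      show Ft ⟨m, by omega⟩ (stateAt n Ft s0 t) = _
      rw [hFt, galoisG_eq_false hmin1 hτn hn2 (Or.inl (show m < τ by omega)),
        Bool.xor_false]
      congr 1
      apply Fin.ext
      show (m + 1) % n = m + 1
      exact Nat.mod_eq_of_lt (by omega)
    rw [← h1, ih (by omega) (t + 1), show t + 1 + m = t + (m + 1) by omega]

lemma galois_shift (hmin1 : ∀ S ∈ P, 1 ≤ minIdx S) (hτn : τ ≤ n - 2) (hn2 : 2 ≤ n)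
    (hFt : ∀ i s, Ft i s = xor (s (succIdx i)) (galoisG n P τ i s))
    (j : Fin n) (m : ℕ) (hjm : (j : ℕ) = m) (hj : m ≤ τ) (t : ℕ) :
    stateAt n Ft s0 t j = stateAt n Ft s0 (t + m) ⟨0, by omega⟩ := by
  subst hjm
  conv_lhs => rw [show j = ⟨(j : ℕ), j.isLt⟩ from rfl]
  exact galois_shift_aux hmin1 hτn hn2 hFt (j : ℕ) hj t

lemma monomial_shift_eval (hmin1 : ∀ S ∈ P, 1 ≤ minIdx S) (hτn : τ ≤ n - 2) (hn2 : 2 ≤ n)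
    (hFt : ∀ i s, Ft i s = xor (s (succIdx i)) (galoisG n P τ i s))
    {S : Finset (Fin n)} {k t u : ℕ}
    (hkn : k < n) (hk : ∀ i ∈ S, k ≤ (i : ℕ)) (hbound : ∀ i ∈ S, (i : ℕ) - k ≤ τ)
    (ht : ∀ i ∈ S, t + ((i : ℕ) - k) = u + (i : ℕ)) :
    monomial n (shiftSet S k) (stateAt n Ft s0 t)
      = decide (∀ i ∈ S, stateAt n Ft s0 (u + (i : ℕ)) ⟨0, by omega⟩ = true) := by
  rw [monomial_shiftSet hkn hk, decide_eq_decide]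
  apply forall_congr'
  intro i
  apply imp_congr_right
  intro hi
  rw [galois_shift hmin1 hτn hn2 hFt ⟨(i : ℕ) - k, by omega⟩ ((i : ℕ) - k) rfl
    (hbound i hi) t, ht i hi]

lemma galois_step_eval (hPne : ∀ S ∈ P, S.Nonempty) (hmin1 : ∀ S ∈ P, 1 ≤ minIdx S)
    (hτle : ∀ S ∈ P, maxIdx S - minIdx S ≤ τ) (hτn : τ ≤ n - 2) (hn2 : 2 ≤ n)
    (hFt : ∀ i s, Ft i s = xor (s (succIdx i)) (galoisG n P τ i s))
    (u e : ℕ) (he : e < n - 1 - τ) (i : Fin n) (hie : (i : ℕ) = n - 2 - e) :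
    bv (galoisG n P τ i (stateAt n Ft s0 (u + 1 + e)))
      = ∑ S ∈ P.filter (fun S => (if minIdx S ≤ n - 1 - τ then minIdx S - 1 else n - 2 - τ) = e),
          bv (decide (∀ j ∈ S, stateAt n Ft s0 (u + (j : ℕ)) ⟨0, by omega⟩ = true)) := by
  rw [galoisG]
  simp only [hie]
  rw [bv_xor, bv_xorSum]
  have e1 : P.filter (fun S => minIdx S ≤ n - 1 - τ ∧ n - 1 - minIdx S = n - 2 - e)
      = P.filter (fun S => minIdx S = e + 1) := by
    apply Finset.filter_congr
    intro S hS
    have := hmin1 S hS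
    omega
  have hAsum : ∑ S ∈ P.filter (fun S => minIdx S ≤ n - 1 - τ ∧ n - 1 - minIdx S = n - 2 - e),
      bv (monomial n (shiftSet S (minIdx S)) (stateAt n Ft s0 (u + 1 + e)))
      = ∑ S ∈ P.filter (fun S => minIdx S = e + 1),
          bv (decide (∀ j ∈ S, stateAt n Ft s0 (u + (j : ℕ)) ⟨0, by omega⟩ = true)) := by
    rw [e1]
    apply Finset.sum_congr rfl
    intro S hS
    rw [Finset.mem_filter] at hS
    congr 1
    have hmem := hS.1
    have hminS := hS.2
    have h1m := hmin1 S hmem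
    apply monomial_shift_eval hmin1 hτn hn2 hFt
    · omega
    · intro j hj; exact minIdx_le hj
    · intro j hj
      have := le_maxIdx hj
      have := hτle S hmem
      omega
    · intro j hj
      have := minIdx_le hj
      omega
  by_cases hcase : n - 2 - e = τ
  · rw [if_pos hcase, bv_xorSum, hAsum]
    have hBsum : ∑ S ∈ P.filter (fun S => n - 1 - τ < minIdx S),
        bv (monomial n (shiftSet S (n - 1 - τ)) (stateAt n Ft s0 (u + 1 + e)))
        = ∑ S ∈ P.filter (fun S => n - 1 - τ < minIdx S),
            bv (decide (∀ j ∈ S, stateAt n Ft s0 (u + (j : ℕ)) ⟨0, by omega⟩ = true)) := by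
      apply Finset.sum_congr rfl
      intro S hS
      rw [Finset.mem_filter] at hS
      congr 1
      apply monomial_shift_eval hmin1 hτn hn2 hFt
      · omega
      · intro j hj
        have := minIdx_le hj
        omega
      · intro j hj
        have := j.isLt
        omega
      · intro j hj
        have := minIdx_le hj
        have := hS.2
        omega
    rw [hBsum]
    have hs1 : (P.filter (fun S => (if minIdx S ≤ n - 1 - τ then minIdx S - 1 else n - 2 - τ) = e)).filter
        (fun S => minIdx S ≤ n - 1 - τ) = P.filter (fun S => minIdx S = e + 1) := by
      rw [Finset.filter_filter]
      apply Finset.filter_congr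
      intro S hS
      have := hmin1 S hS
      constructor
      · rintro ⟨h1, h2⟩
        rw [if_pos h2] at h1
        omega
      · intro h1
        have h2 : minIdx S ≤ n - 1 - τ := by omega
        rw [if_pos h2]
        omega
    have hs2 : (P.filter (fun S => (if minIdx S ≤ n - 1 - τ then minIdx S - 1 else n - 2 - τ) = e)).filter
        (fun S => ¬ minIdx S ≤ n - 1 - τ) = P.filter (fun S => n - 1 - τ < minIdx S) := by
      rw [Finset.filter_filter]
      apply Finset.filter_congr
      intro S hS
      have := hmin1 S hS
      rw [not_le]
      constructor
      · rintro ⟨h1, h2⟩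
        exact h2
      · intro h1
        have h2 : ¬ minIdx S ≤ n - 1 - τ := by omega
        rw [if_neg h2]
        exact ⟨by omega, by omega⟩
    rw [← Finset.sum_filter_add_sum_filter_not
      (P.filter (fun S => (if minIdx S ≤ n - 1 - τ then minIdx S - 1 else n - 2 - τ) = e))
      (fun S => minIdx S ≤ n - 1 - τ), hs1, hs2]
  · rw [if_neg hcase, hAsum, show bv false = 0 from rfl, add_zero]
    apply Finset.sum_congr _ (fun S _ => rfl)
    apply Finset.filter_congr
    intro S hS
    have := hmin1 S hS
    constructor
    · intro h1
      have h2 : minIdx S ≤ n - 1 - τ := by omega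
      rw [if_pos h2]
      omega
    · intro h1
      by_cases h2 : minIdx S ≤ n - 1 - τ
      · rw [if_pos h2] at h1
        omega
      · rw [if_neg h2] at h1
        omega

lemma galois_recurrence (hPne : ∀ S ∈ P, S.Nonempty) (hmin1 : ∀ S ∈ P, 1 ≤ minIdx S)
    (hτle : ∀ S ∈ P, maxIdx S - minIdx S ≤ τ) (hτn : τ ≤ n - 2) (hn2 : 2 ≤ n)
    (hFt : ∀ i s, Ft i s = xor (s (succIdx i)) (galoisG n P τ i s)) (u : ℕ) :
    bv (stateAt n Ft s0 (u + n) ⟨0, by omega⟩)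
      = bv (stateAt n Ft s0 u ⟨0, by omega⟩)
        + ∑ S ∈ P, bv (decide (∀ j ∈ S, stateAt n Ft s0 (u + (j : ℕ)) ⟨0, by omega⟩ = true)) := by
  have h0n : 0 < n := by omega
  have chain : ∀ d, d ≤ n - 1 - τ →
      bv (stateAt n Ft s0 (u + 1 + d) ⟨n - 1 - d, by omega⟩)
        = bv (stateAt n Ft s0 u ⟨0, h0n⟩)
          + ∑ e ∈ Finset.range d,
              bv (galoisG n P τ ⟨n - 2 - e, by omega⟩ (stateAt n Ft s0 (u + 1 + e))) := by
    intro d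
    induction d with
    | zero =>
      intro _
      rw [Finset.range_zero, Finset.sum_empty, add_zero]
      have harg : u + 1 + 0 = u + 1 := by omega
      rw [harg, stateAt_succ]
      show bv (Ft ⟨n - 1 - 0, by omega⟩ (stateAt n Ft s0 u)) = _
      rw [hFt, galoisG_eq_false hmin1 hτn hn2 (Or.inr (show n - 1 - 0 = n - 1 by omega)),
        Bool.xor_false]
      have hsucc0 : succIdx (⟨n - 1 - 0, by omega⟩ : Fin n) = (⟨0, h0n⟩ : Fin n) := by
        apply Fin.ext
        show (n - 1 - 0 + 1) % n = 0
        rw [show n - 1 - 0 + 1 = n by omega, Nat.mod_self]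
      rw [hsucc0, add_zero]
    | succ d ih =>
      intro hd
      rw [show u + 1 + (d + 1) = (u + 1 + d) + 1 by omega, stateAt_succ]
      show bv (Ft ⟨n - 1 - (d + 1), by omega⟩ (stateAt n Ft s0 (u + 1 + d))) = _
      rw [hFt, bv_xor]
      have hsucc : succIdx (⟨n - 1 - (d + 1), by omega⟩ : Fin n)
          = (⟨n - 1 - d, by omega⟩ : Fin n) := by
        apply Fin.ext
        show (n - 1 - (d + 1) + 1) % n = n - 1 - d
        rw [Nat.mod_eq_of_lt (by omega)]
        omega
      have hidx : (⟨n - 1 - (d + 1), by omega⟩ : Fin n) = ⟨n - 2 - d, by omega⟩ := by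
        apply Fin.ext
        show n - 1 - (d + 1) = n - 2 - d
        omega
      rw [hsucc, hidx, ih (by omega), Finset.sum_range_succ]
      ring
  have main := chain (n - 1 - τ) (le_refl _)
  have hidx2 : (⟨n - 1 - (n - 1 - τ), by omega⟩ : Fin n) = (⟨τ, by omega⟩ : Fin n) := by
    apply Fin.ext
    show n - 1 - (n - 1 - τ) = τ
    omega
  rw [hidx2] at main
  have hshift := galois_shift (s0 := s0) hmin1 hτn hn2 hFt (⟨τ, by omega⟩ : Fin n) τ rfl
    (le_refl τ) (u + 1 + (n - 1 - τ))
  have hshift2 := hshift.trans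
    (congrArg (fun v => stateAt n Ft s0 v ⟨0, h0n⟩) (show u + 1 + (n - 1 - τ) + τ = u + n by omega))
  have regroup : (∑ e ∈ Finset.range (n - 1 - τ),
        bv (galoisG n P τ ⟨n - 2 - e, by omega⟩ (stateAt n Ft s0 (u + 1 + e))))
      = ∑ S ∈ P, bv (decide (∀ j ∈ S, stateAt n Ft s0 (u + (j : ℕ)) ⟨0, by omega⟩ = true)) := by
    trans (∑ e ∈ Finset.range (n - 1 - τ), ∑ S ∈ P.filter
        (fun S => (if minIdx S ≤ n - 1 - τ then minIdx S - 1 else n - 2 - τ) = e),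
        bv (decide (∀ j ∈ S, stateAt n Ft s0 (u + (j : ℕ)) ⟨0, h0n⟩ = true)))
    · exact Finset.sum_congr rfl
        (fun e he => galois_step_eval hPne hmin1 hτle hτn hn2 hFt u e
          (Finset.mem_range.mp he) ⟨n - 2 - e, by omega⟩ rfl)
    exact Finset.sum_fiberwise_of_maps_to
      (g := fun S => if minIdx S ≤ n - 1 - τ then minIdx S - 1 else n - 2 - τ)
      (t := Finset.range (n - 1 - τ))
      (fun S hS => Finset.mem_range.mpr (by
        have := hmin1 S hS
        show (if minIdx S ≤ n - 1 - τ then minIdx S - 1 else n - 2 - τ) < n - 1 - τ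
        split_ifs <;> omega)) _
  exact (congrArg bv hshift2.symm).trans (main.trans
    (congrArg (fun x => bv (stateAt n Ft s0 u ⟨0, h0n⟩) + x) regroup))

end PartB
section PartC

variable {n : ℕ}

lemma fib_shift_aux {F : Fin n → (Fin n → Bool) → Bool} {s0' : Fin n → Bool} (hn1 : 0 < n)
    (hFib1 : ∀ i : Fin n, (i : ℕ) < n - 1 → ∀ s, F i s = s (succIdx i)) :
    ∀ (m : ℕ) (_ : m ≤ n - 1) (t : ℕ),
      stateAt n F s0' t ⟨m, by omega⟩ = stateAt n F s0' (t + m) ⟨0, hn1⟩ := by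
  intro m
  induction m with
  | zero => intro _ t; rfl
  | succ m ih =>
    intro hm t
    have h1 : stateAt n F s0' (t + 1) ⟨m, by omega⟩
        = stateAt n F s0' t ⟨m + 1, by omega⟩ := by
      rw [stateAt_succ]
      show F ⟨m, by omega⟩ (stateAt n F s0' t) = _
      rw [hFib1 ⟨m, by omega⟩ (show m < n - 1 by omega)]
      congr 1
      apply Fin.ext
      show (m + 1) % n = m + 1
      exact Nat.mod_eq_of_lt (by omega)
    rw [← h1, ih (by omega) (t + 1), show t + 1 + m = t + (m + 1) by omega]

lemma fib_shift {F : Fin n → (Fin n → Bool) → Bool} {s0' : Fin n → Bool} (hn1 : 0 < n)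
    (hFib1 : ∀ i : Fin n, (i : ℕ) < n - 1 → ∀ s, F i s = s (succIdx i))
    (j : Fin n) (m : ℕ) (hjm : (j : ℕ) = m) (t : ℕ) :
    stateAt n F s0' t j = stateAt n F s0' (t + m) ⟨0, hn1⟩ := by
  subst hjm
  conv_lhs => rw [show j = ⟨(j : ℕ), j.isLt⟩ from rfl]
  exact fib_shift_aux hn1 hFib1 (j : ℕ) (by have := j.isLt; omega) t

lemma fib_recurrence {F : Fin n → (Fin n → Bool) → Bool} {s0' : Fin n → Bool}
    (hn2 : 2 ≤ n) (hFib : FibonacciP n F) (l : Fin n) (hl : (l : ℕ) = n - 1) (u : ℕ) :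
    bv (stateAt n F s0' (u + n) ⟨0, by omega⟩)
      = bv (stateAt n F s0' u ⟨0, by omega⟩)
        + bv (gfun n F l (stateAt n F s0' u)) := by
  have h0n : 0 < n := by omega
  have h1 := (fib_shift (s0' := s0') h0n hFib.1 (⟨n - 1, by omega⟩ : Fin n) (n - 1) rfl
    (u + 1)).trans
    (congrArg (fun v => stateAt n F s0' v ⟨0, h0n⟩) (show u + 1 + (n - 1) = u + n by omega))
  have h2 : stateAt n F s0' (u + 1) ⟨n - 1, by omega⟩ = F l (stateAt n F s0' u) := by
    rw [stateAt_succ]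
    show F ⟨n - 1, by omega⟩ _ = _
    congr 1
    apply Fin.ext
    show n - 1 = (l : ℕ)
    omega
  have h3 : ∀ s, F l s = xor (s (succIdx l)) (gfun n F l s) := by
    intro s
    show F l s = xor (s (succIdx l)) (xor (F l s) (s (succIdx l)))
    cases (F l s) <;> cases (s (succIdx l)) <;> rfl
  have h4 : succIdx l = (⟨0, h0n⟩ : Fin n) := by
    apply Fin.ext
    show ((l : ℕ) + 1) % n = 0
    rw [hl, show n - 1 + 1 = n by omega, Nat.mod_self]
  calc bv (stateAt n F s0' (u + n) ⟨0, h0n⟩)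
      = bv (F l (stateAt n F s0' u)) := congrArg bv (h1.symm.trans h2)
    _ = bv (xor ((stateAt n F s0' u) (succIdx l)) (gfun n F l (stateAt n F s0' u))) :=
        congrArg bv (h3 _)
    _ = bv ((stateAt n F s0' u) (succIdx l)) + bv (gfun n F l (stateAt n F s0' u)) :=
        bv_xor _ _
    _ = _ := by rw [h4]

end PartC
/-- Algorithm 1, correctness: the fully shifted Galois NLFSR `Ñ`
computed from a Fibonacci NLFSR `N` is uniform and equivalent to `N`. -/
theorem fully_shifted_uniform_and_equivalent (n : ℕ)
    (F : Fin n → (Fin n → Bool) → Bool) (hFib : FibonacciP n F)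
    (l : Fin n) (hl : (l : ℕ) = n - 1)
    (P : Finset (Finset (Fin n)))
    (hP : ∀ S : Finset (Fin n), S ∈ P ↔ anfCoeff n (gfun n F l) S = true)
    (hPsub : ∀ S ∈ P, S.Nonempty ∧ ∀ i ∈ S, 1 ≤ (i : ℕ))
    (hbig : ∃ S ∈ P, 2 ≤ S.card)
    (τ : ℕ)
    (hτ : τ = (P.filter (fun S => 2 ≤ S.card)).sup (fun S => maxIdx S - minIdx S))
    (Ft : Fin n → (Fin n → Bool) → Bool)
    (hFt : ∀ (i : Fin n) (s : Fin n → Bool), Ft i s = xor (s (succIdx i)) (galoisG n P τ i s)) :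
    UniformN n Ft ∧ EquivalentN n Ft F := by
  classical
  obtain ⟨SB, hSBP, hSBc⟩ := hbig
  have hn2 : 2 ≤ n := by
    obtain ⟨i, hi⟩ := (hPsub SB hSBP).1
    have h1 := (hPsub SB hSBP).2 i hi
    have := i.isLt
    omega
  have h0n : 0 < n := by omega
  have hPne : ∀ S ∈ P, S.Nonempty := fun S hS => (hPsub S hS).1
  have hmin1 : ∀ S ∈ P, 1 ≤ minIdx S := by
    intro S hS
    obtain ⟨i, hi, he⟩ := minIdx_mem (hPne S hS)
    have := (hPsub S hS).2 i hi
    omega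
  have hmaxn : ∀ S ∈ P, maxIdx S ≤ n - 1 := by
    intro S hS
    obtain ⟨i, hi, he⟩ := maxIdx_mem (hPne S hS)
    have := i.isLt
    omega
  have hτle : ∀ S ∈ P, maxIdx S - minIdx S ≤ τ := by
    intro S hS
    by_cases hc : 2 ≤ S.card
    · rw [hτ]
      exact Finset.le_sup (f := fun S => maxIdx S - minIdx S)
        (Finset.mem_filter.mpr ⟨hS, hc⟩)
    · obtain ⟨a, ha⟩ := Finset.card_eq_one.mp (show S.card = 1 by
        have h1 := Finset.card_pos.mpr (hPne S hS)
        omega)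
      obtain ⟨i, hi, he⟩ := minIdx_mem (hPne S hS)
      obtain ⟨i', hi', he'⟩ := maxIdx_mem (hPne S hS)
      rw [ha, Finset.mem_singleton] at hi hi'
      subst hi
      subst hi'
      omega
  have hτn : τ ≤ n - 2 := by
    rw [hτ]
    apply Finset.sup_le
    intro S hSf
    rw [Finset.mem_filter] at hSf
    have := hmin1 S hSf.1
    have := hmaxn S hSf.1
    omega
  constructor
  · -- Uniformity
    have hgf : ∀ i : Fin n, gfun n Ft i = galoisG n P τ i := by
      intro i
      funext s
      rw [gfun, hFt]
      cases (s (succIdx i)) <;> cases (galoisG n P τ i s) <;> rfl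
    have hterm : τ ≤ terminalBit n Ft := by
      apply le_csSup
      · exact ⟨n, fun m hm => le_of_lt hm.1⟩
      · refine ⟨by omega, ?_⟩
        intro j hj s
        rw [hFt, galoisG_eq_false hmin1 hτn hn2 (Or.inl hj), Bool.xor_false]
    constructor
    · intro i hmem
      rw [hgf] at hmem
      obtain ⟨hk, hi1, hi2⟩ := depF_galoisG hPne hmin1 hτle hτn hn2 hmem
      have hv : ((succIdx i : Fin n) : ℕ) = (i : ℕ) + 1 := by
        show ((i : ℕ) + 1) % n = (i : ℕ) + 1
        exact Nat.mod_eq_of_lt (by omega)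
      omega
    · intro i hi k hk
      rw [hgf] at hk
      obtain ⟨hk1, _, _⟩ := depF_galoisG hPne hmin1 hτle hτn hn2 hk
      omega
  · -- Equivalence
    set s0 : Fin n → Bool := fun _ => false with hs0
    set s0' : Fin n → Bool := fun j => stateAt n Ft s0 (j : ℕ) ⟨0, h0n⟩ with hs0'
    have hg : ∀ s, bv (gfun n F l s) = ∑ S ∈ P, bv (monomial n S s) := by
      intro s
      rw [anf_expand n (gfun n F l) s]
      apply Finset.sum_congr _ (fun S _ => rfl)
      ext S
      rw [Finset.mem_filter]
      constructor
      · exact fun h => (hP S).mpr h.2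
      · exact fun h => ⟨Finset.mem_univ S, (hP S).mp h⟩
    have hbase : ∀ t, t < n → stateAt n F s0' t ⟨0, h0n⟩ = stateAt n Ft s0 t ⟨0, h0n⟩ := by
      intro t ht
      have h1 := fib_shift (s0' := s0') h0n hFib.1 ⟨t, ht⟩ t rfl 0
      rw [Nat.zero_add] at h1
      rw [← h1]
      rfl
    have key : ∀ t, stateAt n F s0' t ⟨0, h0n⟩ = stateAt n Ft s0 t ⟨0, h0n⟩ := by
      intro t
      induction t using Nat.strong_induction_on with
      | _ t ih =>
        by_cases ht : t < n
        · exact hbase t ht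
        · have ht' : t = (t - n) + n := by omega
          set u := t - n with hu
          apply bv_inj
          rw [ht']
          have step1 := fib_recurrence (s0' := s0') hn2 hFib l hl u
          have step5 := galois_recurrence (s0 := s0) hPne hmin1 hτle hτn hn2 hFt u
          have step2 := hg (stateAt n F s0' u)
          have step3 : ∑ S ∈ P, bv (monomial n S (stateAt n F s0' u))
              = ∑ S ∈ P, bv (decide (∀ j ∈ S,
                  stateAt n Ft s0 (u + (j : ℕ)) ⟨0, h0n⟩ = true)) := by
            apply Finset.sum_congr rfl
            intro S hS
            congr 1
            rw [monomial, decide_eq_decide]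
            apply forall_congr'
            intro j
            apply imp_congr_right
            intro hj
            rw [fib_shift (s0' := s0') h0n hFib.1 j (j : ℕ) rfl u,
              ih (u + (j : ℕ)) (by have := j.isLt; omega)]
          have step4 : bv (stateAt n F s0' u ⟨0, h0n⟩)
              = bv (stateAt n Ft s0 u ⟨0, h0n⟩) :=
            congrArg bv (ih u (by omega))
          have comb : bv (stateAt n F s0' u ⟨0, h0n⟩)
                + bv (gfun n F l (stateAt n F s0' u))
              = bv (stateAt n Ft s0 u ⟨0, h0n⟩)
                + ∑ S ∈ P, bv (decide (∀ j ∈ S,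
                    stateAt n Ft s0 (u + (j : ℕ)) ⟨0, h0n⟩ = true)) := by
            rw [step2, step3, step4]
          exact step1.trans (comb.trans step5.symm)
    refine ⟨s0, s0', ?_⟩
    intro t z hz
    have hzeq : z = ⟨0, h0n⟩ := Fin.ext hz
    rw [hzeq]
    exact (key t).symm
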